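/- Let p ≥ 1 and 1 ≤ k ≤ p be integers, let λ_0, λ_1, …, λ_p be pairwise distinct reals, let h ≠ 0, and set r_j := (λ_j − λ_0)/h for j = 1, …, p (so the r_j are pairwise distinct and nonzero). Let y_0, y_1, …, y_p ∈ ℝ and let P be the unique polynomial of degree at most p with P(λ_j) = y_j for j = 0, 1, …, p. If a ∈ ℝ^p satisfies Σ_{j=1}^p a_j r_j^i / i! = δ_{ik} for every i = 1, …, p, then P^{(k)}(λ_0) = h^{−k} Σ_{j=1}^p a_j (y_j − y_0). That is, the k-th derivative at λ_0 of the Lagrange interpolating polynomial equals the full-order Taylor-difference estimate of the k-th derivative. -/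

import Mathlib

/-- The `k`-th derivative at `λ_0` of the Lagrange interpolating polynomial
equals the full-order Taylor-difference estimate of the `k`-th derivative. -/
theorem stmt_15 (p k : ℕ) (hp : 1 ≤ p) (hk1 : 1 ≤ k) (hkp : k ≤ p)
    (lam : ℕ → ℝ)
    (hdist : ∀ i ≤ p, ∀ j ≤ p, i ≠ j → lam i ≠ lam j)
    (h : ℝ) (hh : h ≠ 0)
    (r : ℕ → ℝ) (hr : ∀ j, r j = (lam j - lam 0) / h)
    (y : ℕ → ℝ)
    (P : Polynomial ℝ) (hdeg : P.natDegree ≤ p)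
    (hP : ∀ j ≤ p, P.eval (lam j) = y j)
    (a : ℕ → ℝ)
    (ha : ∀ i ∈ Finset.Icc 1 p,
      ∑ j ∈ Finset.Icc 1 p, a j * r j ^ i / (i.factorial : ℝ) =
        if i = k then 1 else 0) :
    ((fun Q => Polynomial.derivative Q)^[k] P).eval (lam 0) =
      (h ^ k)⁻¹ * ∑ j ∈ Finset.Icc 1 p, a j * (y j - y 0) := by
  set c : ℕ → ℝ := fun i => (Polynomial.hasseDeriv i P).eval (lam 0) with hc
  have hrange : Finset.range (p + 1) = insert 0 (Finset.Icc 1 p) := by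
    ext x; simp; omega
  have htay : ∀ t : ℝ, P.eval (lam 0 + t) =
      ∑ i ∈ Finset.range (p + 1), c i * t ^ i := by
    intro t
    rw [add_comm, ← Polynomial.taylor_eval,
      Polynomial.eval_eq_sum_range' (n := p + 1)
        (by rw [Polynomial.natDegree_taylor]; omega) t]
    exact Finset.sum_congr rfl fun i _ => by rw [Polynomial.taylor_coeff]
  have hyj : ∀ j ∈ Finset.Icc 1 p, y j - y 0 =
      ∑ i ∈ Finset.Icc 1 p, c i * (r j * h) ^ i := by
    intro j hj
    simp only [Finset.mem_Icc] at hj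
    have hlam : lam j = lam 0 + r j * h := by rw [hr]; field_simp; ring
    have h0 : y 0 = c 0 := by
      rw [← hP 0 (Nat.zero_le p), hc]; simp
    rw [← hP j hj.2, hlam, htay, hrange, Finset.sum_insert (by simp), h0]
    ring
  have hsum : ∑ j ∈ Finset.Icc 1 p, a j * (y j - y 0) =
      c k * h ^ k * (k.factorial : ℝ) := by
    calc ∑ j ∈ Finset.Icc 1 p, a j * (y j - y 0)
        = ∑ j ∈ Finset.Icc 1 p, ∑ i ∈ Finset.Icc 1 p,
            c i * h ^ i * (i.factorial : ℝ) * (a j * r j ^ i / (i.factorial : ℝ)) := by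
          refine Finset.sum_congr rfl fun j hj => ?_
          rw [hyj j hj, Finset.mul_sum]
          refine Finset.sum_congr rfl fun i _ => ?_
          have : (i.factorial : ℝ) ≠ 0 := Nat.cast_ne_zero.mpr i.factorial_ne_zero
          field_simp
          ring
      _ = ∑ i ∈ Finset.Icc 1 p,
            c i * h ^ i * (i.factorial : ℝ) * (if i = k then 1 else 0) := by
          rw [Finset.sum_comm]
          refine Finset.sum_congr rfl fun i hi => ?_
          rw [← Finset.mul_sum, ha i hi]
      _ = c k * h ^ k * (k.factorial : ℝ) := by
          simp only [mul_ite, mul_one, mul_zero, Finset.sum_ite_eq', Finset.mem_Icc]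
          simp [hk1, hkp]
  have hderiv : ((fun Q => Polynomial.derivative Q)^[k] P).eval (lam 0) =
      (k.factorial : ℝ) * c k := by
    have := congrFun (Polynomial.factorial_smul_hasseDeriv (R := ℝ) (k := k)) P
    simp only [LinearMap.smul_apply, Polynomial.smul_eval] at this ⊢
    rw [show (fun Q => Polynomial.derivative Q) = ⇑(Polynomial.derivative (R := ℝ)) from rfl,
      ← this]
    simp [hc, mul_comm]
  rw [hderiv, hsum]
  have hpk : h ^ k ≠ 0 := pow_ne_zero _ hh
  field_simp
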